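/- Let u ∈ G(ℝ⁺), where ℝ⁺ = (0,∞), let α ∈ ℝ, and suppose u(λx) = λ^α u(x) holds in G(ℝ⁺) for every real λ > 0. Then u(x) = c x^α in G(ℝ⁺) for some generalized complex number c; i.e. there is a moderate net (c_ε) of complex numbers such that the net (u_ε(x) − c_ε x^α)_ε is negligible on ℝ⁺. -/

import Mathlib

open Set Filter Topology MeasureTheory

noncomputable section

variable {E F : Type*} [NormedAddCommGroup E] [NormedSpace ℝ E]
  [NormedAddCommGroup F] [NormedSpace ℝ F]

/-- A net of smooth functions, indexed by `ε ∈ (0,1]`, is *moderate* on the open set `Ω`: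
all iterated derivatives are `O(ε^{-N})` on compact subsets, for some `N`. -/
def IsModerate (Ω : Set E) (u : ℝ → E → F) : Prop :=
  (∀ ε ∈ Set.Ioc (0:ℝ) 1, ContDiffOn ℝ (⊤:ℕ∞) (u ε) Ω) ∧
  ∀ K : Set E, IsCompact K → K ⊆ Ω → ∀ n : ℕ, ∃ N : ℕ, ∃ C : ℝ, ∃ ε₀ : ℝ, 0 < ε₀ ∧
    ∀ ε : ℝ, 0 < ε → ε < ε₀ → ∀ x ∈ K,
      ‖iteratedFDerivWithin ℝ n (u ε) Ω x‖ ≤ C * ε ^ (-(N:ℤ))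

/-- A net of smooth functions is *negligible* on `Ω`: all iterated derivatives are `O(ε^m)`
on compact subsets, for every `m`. -/
def IsNegligible (Ω : Set E) (u : ℝ → E → F) : Prop :=
  (∀ ε ∈ Set.Ioc (0:ℝ) 1, ContDiffOn ℝ (⊤:ℕ∞) (u ε) Ω) ∧
  ∀ K : Set E, IsCompact K → K ⊆ Ω → ∀ n : ℕ, ∀ m : ℕ, ∃ C : ℝ, ∃ ε₀ : ℝ, 0 < ε₀ ∧
    ∀ ε : ℝ, 0 < ε → ε < ε₀ → ∀ x ∈ K,
      ‖iteratedFDerivWithin ℝ n (u ε) Ω x‖ ≤ C * ε ^ m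

/-- A net of numbers is *moderate*: `O(ε^{-N})` for some `N`. -/
def NumModerate (c : ℝ → F) : Prop :=
  ∃ N : ℕ, ∃ C : ℝ, ∃ ε₀ : ℝ, 0 < ε₀ ∧ ∀ ε : ℝ, 0 < ε → ε < ε₀ → ‖c ε‖ ≤ C * ε ^ (-(N:ℤ))

/-- A net of numbers is *negligible*: `O(ε^m)` for every `m`. -/
def NumNegligible (c : ℝ → F) : Prop :=
  ∀ m : ℕ, ∃ C : ℝ, ∃ ε₀ : ℝ, 0 < ε₀ ∧ ∀ ε : ℝ, 0 < ε → ε < ε₀ → ‖c ε‖ ≤ C * ε ^ m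

/-- A net of points is a representative of a *compactly supported generalized point* of `Ω`. -/
def CompactlySupportedPoint (Ω : Set E) (a : ℝ → E) : Prop :=
  ∃ K : Set E, IsCompact K ∧ K ⊆ Ω ∧ ∃ ε₀ : ℝ, 0 < ε₀ ∧ ∀ ε : ℝ, 0 < ε → ε < ε₀ → a ε ∈ K

/-- The partial order on generalized reals, on representatives: `a ≤ b` iff `b - a` has a
representative with all terms nonnegative, i.e. `a ε + n ε ≤ b ε` for some negligible `n`. -/
def TildeLe (a b : ℝ → ℝ) : Prop :=
  ∃ n : ℝ → ℝ, NumNegligible n ∧ ∀ ε ∈ Set.Ioc (0:ℝ) 1, a ε + n ε ≤ b ε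

/-- Strict order `a << b`: `b - a` is strictly positive, i.e. `b ε - a ε > ε^m` for some `m`
and all small `ε`. -/
def TildeLt (a b : ℝ → ℝ) : Prop :=
  ∃ m : ℕ, ∃ ε₀ : ℝ, 0 < ε₀ ∧ ∀ ε : ℝ, 0 < ε → ε < ε₀ → a ε + ε ^ m < b ε


namespace S5

open Real

def gr : ℝ := (1 + Real.sqrt 5) / 2

lemma gr_lb : 8/5 ≤ gr := by
  have h : Real.sqrt 5 ^ 2 = 5 := Real.sq_sqrt (by norm_num)
  have h' : 0 ≤ Real.sqrt 5 := Real.sqrt_nonneg 5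
  unfold gr
  nlinarith

lemma gr_ub : gr ≤ 13/8 := by
  have h : Real.sqrt 5 ^ 2 = 5 := Real.sq_sqrt (by norm_num)
  have h' : 0 ≤ Real.sqrt 5 := Real.sqrt_nonneg 5
  unfold gr
  nlinarith

lemma gr_sq : gr ^ 2 = gr + 1 := goldenRatio_sq

set_option maxHeartbeats 1000000 in
/-- The basic walk. -/
lemma walk (f : ℝ → ℂ) (A B D : ℝ)
    (h1 : ∀ x ∈ Icc (A-2) (B+1), ‖f (x+1) - f x‖ ≤ D)
    (hg : ∀ x ∈ Icc (A-2) (B+1), ‖f (x+gr) - f x‖ ≤ D)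
    (t : ℝ) (htA : A ≤ t) (htB : t ≤ B) :
    ∀ n : ℕ, ∀ p q : ℕ, p + q = n → 0 ≤ q*gr - p → q*gr - p ≤ 1 →
      ‖f (t + (q*gr - p)) - f t‖ ≤ n * D := by
  intro n
  induction n using Nat.strong_induction_on with
  | _ n IH =>
    intro p q hpq he0 he1
    have hgl := gr_lb; have hgu := gr_ub
    rcases Nat.eq_zero_or_pos q with hq0 | hq1
    · -- q = 0 forces p = 0
      subst hq0
      have hp0 : p = 0 := by
        by_contra hp
        have : (1:ℝ) ≤ p := by exact_mod_cast Nat.one_le_iff_ne_zero.2 hp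
        simp only [Nat.cast_zero, zero_mul] at he0
        linarith
      subst hp0
      have hDnn : 0 ≤ D := le_trans (norm_nonneg _) (h1 t ⟨by linarith, by linarith⟩)
      simp only [Nat.cast_zero, zero_mul, sub_zero, add_zero, sub_self, norm_zero]
      exact mul_nonneg (Nat.cast_nonneg n) hDnn
    · -- q ≥ 1 ; then p ≥ 1
      have hq1' : (1:ℝ) ≤ q := by exact_mod_cast hq1
      have hp1 : 1 ≤ p := by
        by_contra hp
        have hp0 : (p:ℝ) = 0 := by
          have : p = 0 := by omega
          simp [this]
        have : (1:ℝ)*gr - 0 ≤ q*gr - p := by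
          rw [hp0]; nlinarith
        nlinarith
    -- case split on sign of (q-1)·gr - (p-1)
      set e : ℝ := q*gr - p with hedef
      have hDnn : 0 ≤ D := le_trans (norm_nonneg _) (h1 t ⟨by linarith, by linarith⟩)
      by_cases hA : 0 ≤ ((q:ℝ)-1)*gr - ((p:ℝ)-1)
      · -- use (p-1, q-1)
        set e' : ℝ := ((q:ℝ)-1)*gr - ((p:ℝ)-1) with he'def
        have he'1 : e' ≤ 1 := by simp only [he'def]; nlinarith
        have hcast : ((q-1:ℕ):ℝ) = (q:ℝ)-1 := by
          have := hq1; push_cast [Nat.cast_sub hq1]; ring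
        have hcastp : ((p-1:ℕ):ℝ) = (p:ℝ)-1 := by
          push_cast [Nat.cast_sub hp1]; ring
        have hn2 : (p-1) + (q-1) = n - 2 := by omega
        have hlt : n - 2 < n := by omega
        have IH' := IH (n-2) hlt (p-1) (q-1) hn2 (by rw [hcast, hcastp]; exact hA)
          (by rw [hcast, hcastp]; exact he'1)
        rw [hcast, hcastp, ← he'def] at IH'
        -- f(t+e) - f(t+e') is two elementary differences at x := t + e' - 1
        set x : ℝ := t + e' - 1 with hxdef
        have hxmem : x ∈ Icc (A-2) (B+1) := by
          constructor <;> simp only [hxdef] <;> linarith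
        have key : f (t+e) - f (t+e') = (f (x+gr) - f x) - (f (x+1) - f x) := by
          have h1' : t + e' = x + 1 := by rw [hxdef]; ring
          have h2' : t + e = x + gr := by
            rw [hxdef, hedef, he'def]; ring
          rw [h1', h2']; ring
        have hb : ‖f (t+e) - f (t+e')‖ ≤ 2*D := by
          rw [key]
          calc ‖(f (x+gr) - f x) - (f (x+1) - f x)‖
              ≤ ‖f (x+gr) - f x‖ + ‖f (x+1) - f x‖ := norm_sub_le _ _
            _ ≤ D + D := add_le_add (hg x hxmem) (h1 x hxmem)
            _ = 2*D := by ring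
        calc ‖f (t+e) - f t‖ ≤ ‖f (t+e) - f (t+e')‖ + ‖f (t+e') - f t‖ := by
              rw [← sub_add_sub_cancel (f (t+e)) (f (t+e')) (f t)]
              exact norm_add_le _ _
          _ ≤ 2*D + (↑(n-2):ℝ)*D := add_le_add hb IH'
          _ ≤ n * D := by
              have : ((n-2:ℕ):ℝ) ≤ (n:ℝ) - 2 + 2 - 2 := by
                have h2n : 2 ≤ n := by omega
                push_cast [Nat.cast_sub h2n]; ring_nf; norm_num
              nlinarith [hDnn]
      · -- p ≥ 2; use (p-2, q-1)
        push_neg at hA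
        have hp2 : 2 ≤ p := by
          by_contra hp
          have hpe : p = 1 := by omega
          rw [hpe] at hA
          push_cast at hA
          nlinarith
        set e' : ℝ := ((q:ℝ)-1)*gr - ((p:ℝ)-2) with he'def
        have he'0 : 0 ≤ e' := by simp only [he'def]; nlinarith
        have he'1 : e' ≤ 1 := by
          have hh : e' = (((q:ℝ)-1)*gr - ((p:ℝ)-1)) + 1 := by rw [he'def]; ring
          linarith
        have hcast : ((q-1:ℕ):ℝ) = (q:ℝ)-1 := by push_cast [Nat.cast_sub hq1]; ring
        have hcastp : ((p-2:ℕ):ℝ) = (p:ℝ)-2 := by push_cast [Nat.cast_sub hp2]; ring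
        have hn3 : (p-2) + (q-1) = n - 3 := by omega
        have hlt : n - 3 < n := by omega
        have IH' := IH (n-3) hlt (p-2) (q-1) hn3 (by rw [hcast, hcastp]; exact he'0)
          (by rw [hcast, hcastp]; exact he'1)
        rw [hcast, hcastp, ← he'def] at IH'
        set x : ℝ := t + e' - 2 with hxdef
        have hxmem : x ∈ Icc (A-2) (B+1) := by
          constructor <;> simp only [hxdef] <;> linarith
        have hxmem1 : x + 1 ∈ Icc (A-2) (B+1) := by
          constructor <;> simp only [hxdef] <;> linarith
        have key : f (t+e) - f (t+e') =
            (f (x+gr) - f x) - (f (x+1) - f x) - (f ((x+1)+1) - f (x+1)) := by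
          have h1' : t + e' = (x+1) + 1 := by rw [hxdef]; ring
          have h2' : t + e = x + gr := by
            rw [hxdef, hedef, he'def]; ring
          rw [h1', h2']; ring
        have hb : ‖f (t+e) - f (t+e')‖ ≤ 3*D := by
          rw [key]
          calc ‖(f (x+gr) - f x) - (f (x+1) - f x) - (f ((x+1)+1) - f (x+1))‖
              ≤ ‖(f (x+gr) - f x) - (f (x+1) - f x)‖ + ‖f ((x+1)+1) - f (x+1)‖ :=
                norm_sub_le _ _
            _ ≤ (‖f (x+gr) - f x‖ + ‖f (x+1) - f x‖) + ‖f ((x+1)+1) - f (x+1)‖ := by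
                gcongr; exact norm_sub_le _ _
            _ ≤ (D + D) + D := by
                gcongr
                · exact hg x hxmem
                · exact h1 x hxmem
                · exact h1 (x+1) hxmem1
            _ = 3*D := by ring
        calc ‖f (t+e) - f t‖ ≤ ‖f (t+e) - f (t+e')‖ + ‖f (t+e') - f t‖ := by
              rw [← sub_add_sub_cancel (f (t+e)) (f (t+e')) (f t)]
              exact norm_add_le _ _
          _ ≤ 3*D + (↑(n-3):ℝ)*D := add_le_add hb IH'
          _ ≤ n * D := by
              have h3n : 3 ≤ n := by omega
              have : ((n-3:ℕ):ℝ) = (n:ℝ) - 3 := by push_cast [Nat.cast_sub h3n]; ring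
              nlinarith [hDnn]


/-- The pair sequence realizing `(φ-1)(2-φ)^k = Q k · φ - P k`. -/
def PQ : ℕ → ℕ × ℕ
  | 0 => (1, 1)
  | k+1 => (2*(PQ k).1 + (PQ k).2, (PQ k).1 + (PQ k).2)

def Pp (k : ℕ) : ℕ := (PQ k).1
def Qq (k : ℕ) : ℕ := (PQ k).2

lemma Pp_succ (k : ℕ) : (Pp (k+1) : ℝ) = 2*(Pp k) + (Qq k) := by
  simp only [Pp, Qq, PQ]; push_cast; ring

lemma Qq_succ (k : ℕ) : (Qq (k+1) : ℝ) = (Pp k) + (Qq k) := by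
  simp only [Pp, Qq, PQ]; push_cast; ring

lemma PQ_val : ∀ k, (Qq k : ℝ) * gr - (Pp k) = (gr - 1) * (2 - gr)^k := by
  intro k
  induction k with
  | zero => simp [Pp, Qq, PQ]
  | succ k ih =>
    have h2 := gr_sq
    rw [Qq_succ, Pp_succ, pow_succ]
    linear_combination (2-gr) * ih + (Qq k : ℝ) * h2

lemma PQ_sum : ∀ k, (Pp k + Qq k : ℝ) ≤ 3^(k+1) := by
  intro k
  induction k with
  | zero => norm_num [Pp, Qq, PQ]
  | succ k ih =>
    rw [Pp_succ, Qq_succ, pow_succ]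
    nlinarith [(Nat.cast_nonneg (Pp k) : (0:ℝ) ≤ Pp k), (Nat.cast_nonneg (Qq k) : (0:ℝ) ≤ Qq k)]

lemma exists_pq (δ : ℝ) (hδ0 : 0 < δ) (hδ : δ < 1/2) :
    ∃ p q : ℕ, 0 < (q:ℝ)*gr - p ∧ (q:ℝ)*gr - p ≤ δ ∧
      (p + q : ℝ) ≤ 3 / ((q:ℝ)*gr - p)^2 ∧ δ ≤ 3*((q:ℝ)*gr - p) := by
  classical
  have hgl := gr_lb; have hgu := gr_ub
  have h2g0 : (0:ℝ) < 2 - gr := by linarith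
  have h2g : 2 - gr ≤ 1/2 := by linarith
  have hg1 : (0:ℝ) < gr - 1 := by linarith
  have hex : ∃ k : ℕ, (gr - 1) * (2 - gr)^k ≤ δ := by
    obtain ⟨k, hk⟩ := exists_pow_lt_of_lt_one hδ0 (show (1:ℝ)/2 < 1 by norm_num)
    refine ⟨k, ?_⟩
    have h1 : (2 - gr)^k ≤ (1/2:ℝ)^k := pow_le_pow_left₀ h2g0.le h2g k
    have h2 : (gr - 1) * (2 - gr)^k ≤ (1/2:ℝ)^k := by
      nlinarith [pow_nonneg h2g0.le k]
    linarith
  set k := Nat.find hex with hkdef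
  have hk : (gr - 1) * (2 - gr)^k ≤ δ := Nat.find_spec hex
  refine ⟨Pp k, Qq k, ?_, ?_, ?_, ?_⟩
  · rw [PQ_val]; positivity
  · rw [PQ_val]; exact hk
  · rw [PQ_val]
    have hsum := PQ_sum k
    have he2 : (0:ℝ) < ((gr-1)*(2-gr)^k)^2 := by positivity
    have hkey : (3:ℝ)^k * ((gr-1)*(2-gr)^k)^2 ≤ 1 := by
      have hcomm : ((2-gr)^k)^2 = (((2-gr)^2)^k : ℝ) := by
        rw [← pow_mul, ← pow_mul, mul_comm]
      have h1 : (3:ℝ)^k * ((gr-1)*(2-gr)^k)^2 = (3*((2-gr)^2))^k * (gr-1)^2 := by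
        rw [mul_pow, mul_pow, hcomm]; ring
      rw [h1]
      have h3 : 3*((2-gr):ℝ)^2 ≤ 1 := by nlinarith
      have h4 : (3*((2-gr):ℝ)^2)^k ≤ 1 := pow_le_one₀ (by positivity) h3
      have h5 : ((gr-1):ℝ)^2 ≤ 1 := by nlinarith
      nlinarith [pow_nonneg (show (0:ℝ) ≤ 3*(2-gr)^2 by positivity) k, sq_nonneg (gr-1)]
    rw [le_div_iff₀ he2]
    have h6 : (3:ℝ)^(k+1) * ((gr-1)*(2-gr)^k)^2 ≤ 3 := by
      rw [pow_succ]; nlinarith [hkey]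
    have h7 := mul_le_mul_of_nonneg_right hsum he2.le
    linarith
  · rw [PQ_val]
    rcases Nat.eq_zero_or_pos k with h0 | hpos
    · simp only [h0, pow_zero, mul_one]
      linarith
    · have hkm : ¬ ((gr - 1) * (2 - gr)^(k-1) ≤ δ) := Nat.find_min hex (by omega)
      push_neg at hkm
      have hsplit : (gr-1)*(2-gr)^k = ((gr-1)*(2-gr)^(k-1))*(2-gr) := by
        rw [mul_assoc, ← pow_succ]
        congr 2
        omega
      rw [hsplit]
      have hX0 : (0:ℝ) ≤ (gr-1)*(2-gr)^(k-1) := by positivity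
      have hmul : ((gr-1)*(2-gr)^(k-1)) * (3*(2-gr) - 1) ≥ 0 :=
        mul_nonneg hX0 (by linarith)
      nlinarith [hkm]


lemma approx (f : ℝ → ℂ) (A B D L δ : ℝ) (hA : A ≤ 0) (hB : 0 ≤ B)
    (h1 : ∀ x ∈ Icc (A-2) (B+1), ‖f (x+1) - f x‖ ≤ D)
    (hg : ∀ x ∈ Icc (A-2) (B+1), ‖f (x+gr) - f x‖ ≤ D)
    (hLip : ∀ x ∈ Icc A B, ∀ y ∈ Icc A B, ‖f y - f x‖ ≤ L * |y - x|)
    (hL : 0 ≤ L) (hδ0 : 0 < δ) (hδ : δ < 1/2) :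
    ∀ τ ∈ Icc A B, ‖f τ - f 0‖ ≤ L*δ + ((B - A + 1) * 81 / δ^3) * D := by
  obtain ⟨p, q, he0, heδ, hpq, hδ3⟩ := exists_pq δ hδ0 hδ
  set e : ℝ := (q:ℝ)*gr - p with hedef
  have he1 : e ≤ 1 := by linarith
  have hD : 0 ≤ D := le_trans (norm_nonneg _) (h1 0 ⟨by linarith, by linarith⟩)
  -- upward grid
  have up : ∀ j : ℕ, (j:ℝ)*e ≤ B → ‖f ((j:ℝ)*e) - f 0‖ ≤ (j:ℝ)*((p+q:ℕ):ℝ)*D := by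
    intro j
    induction j with
    | zero => intro _; simp
    | succ j ihj =>
      intro hj1
      have hje : (j:ℝ)*e ≤ B := by
        have : (j:ℝ)*e ≤ ((j+1:ℕ):ℝ)*e := by
          have : (j:ℝ) ≤ ((j+1:ℕ):ℝ) := by push_cast; linarith
          nlinarith
        linarith
      have hjnn : 0 ≤ (j:ℝ)*e := by positivity
      have hw := walk f A B D h1 hg ((j:ℝ)*e) (by linarith) hje (p+q) p q rfl he0.le he1
      have hstep : ((j:ℝ)*e) + e = ((j+1:ℕ):ℝ)*e := by push_cast; ring
      rw [hstep] at hw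
      calc ‖f (((j+1:ℕ):ℝ)*e) - f 0‖
          ≤ ‖f (((j+1:ℕ):ℝ)*e) - f ((j:ℝ)*e)‖ + ‖f ((j:ℝ)*e) - f 0‖ := by
            rw [← sub_add_sub_cancel (f (((j+1:ℕ):ℝ)*e)) (f ((j:ℝ)*e)) (f 0)]
            exact norm_add_le _ _
        _ ≤ ((p+q:ℕ):ℝ)*D + (j:ℝ)*((p+q:ℕ):ℝ)*D := add_le_add hw (ihj hje)
        _ = ((j+1:ℕ):ℝ)*((p+q:ℕ):ℝ)*D := by push_cast; ring
  -- downward grid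
  have dn : ∀ j : ℕ, A ≤ -((j:ℝ)*e) → ‖f (-((j:ℝ)*e)) - f 0‖ ≤ (j:ℝ)*((p+q:ℕ):ℝ)*D := by
    intro j
    induction j with
    | zero => intro _; simp
    | succ j ihj =>
      intro hj1
      have hjA : A ≤ -((j:ℝ)*e) := by
        have : ((j:ℝ))*e ≤ ((j+1:ℕ):ℝ)*e := by
          have : (j:ℝ) ≤ ((j+1:ℕ):ℝ) := by push_cast; linarith
          nlinarith
        linarith
      have ht : A ≤ -(((j+1:ℕ):ℝ)*e) := hj1
      have htB : -(((j+1:ℕ):ℝ)*e) ≤ B := by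
        have : (0:ℝ) ≤ ((j+1:ℕ):ℝ)*e := by positivity
        linarith
      have hw := walk f A B D h1 hg (-(((j+1:ℕ):ℝ)*e)) ht htB (p+q) p q rfl he0.le he1
      have hstep : (-(((j+1:ℕ):ℝ)*e)) + e = -((j:ℝ)*e) := by push_cast; ring
      rw [hstep] at hw
      calc ‖f (-(((j+1:ℕ):ℝ)*e)) - f 0‖
          ≤ ‖f (-(((j+1:ℕ):ℝ)*e)) - f (-((j:ℝ)*e))‖ + ‖f (-((j:ℝ)*e)) - f 0‖ := by
            rw [← sub_add_sub_cancel (f (-(((j+1:ℕ):ℝ)*e))) (f (-((j:ℝ)*e))) (f 0)]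
            exact norm_add_le _ _
        _ ≤ ((p+q:ℕ):ℝ)*D + (j:ℝ)*((p+q:ℕ):ℝ)*D := by
            refine add_le_add ?_ (ihj hjA)
            calc ‖f (-(((j+1:ℕ):ℝ)*e)) - f (-((j:ℝ)*e))‖
                = ‖f (-((j:ℝ)*e)) - f (-(((j+1:ℕ):ℝ)*e))‖ := (norm_sub_rev _ _)
              _ ≤ ((p+q:ℕ):ℝ)*D := hw
        _ = ((j+1:ℕ):ℝ)*((p+q:ℕ):ℝ)*D := by push_cast; ring
  -- the key count bound
  have hBA1 : (1:ℝ) ≤ B - A + 1 := by linarith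
  have key : ∀ j : ℕ, (j:ℝ) ≤ (B - A + 1)/e →
      (j:ℝ)*((p+q:ℕ):ℝ)*D ≤ ((B - A + 1) * 81 / δ^3) * D := by
    intro j hj
    have h_pq : ((p+q:ℕ):ℝ) ≤ 3/e^2 := by push_cast; exact hpq
    have hjpq : (j:ℝ)*((p+q:ℕ):ℝ) ≤ ((B-A+1)/e)*(3/e^2) := by
      apply mul_le_mul hj h_pq (by positivity) (by positivity)
    have heq : ((B-A+1)/e)*(3/e^2) = 3*(B-A+1)/e^3 := by
      field_simp
    have hd3 : δ^3 ≤ 27*e^3 := by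
      have h33 : δ^3 ≤ (3*e)^3 := pow_le_pow_left₀ hδ0.le hδ3 3
      nlinarith
    have hfin : 3*(B-A+1)/e^3 ≤ (B-A+1)*81/δ^3 := by
      rw [div_le_div_iff₀ (by positivity) (by positivity)]
      nlinarith [mul_nonneg (sub_nonneg.2 hBA1) (sub_nonneg.2 hd3)]
    have h8 : ((B-A+1)/e)*(3/e^2) ≤ (B-A+1)*81/δ^3 := by rw [heq]; exact hfin
    exact mul_le_mul_of_nonneg_right (le_trans hjpq h8) hD
  -- final
  intro τ hτ
  obtain ⟨hτA, hτB⟩ := hτ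
  rcases le_or_gt 0 τ with hτ0 | hτ0
  · set j := ⌊τ/e⌋₊ with hjdef
    have hj1 : (j:ℝ) ≤ τ/e := Nat.floor_le (by positivity)
    have hj2 : τ/e < (j:ℝ)+1 := Nat.lt_floor_add_one _
    have hje_le : (j:ℝ)*e ≤ τ := (le_div_iff₀ he0).1 hj1
    have hτje : τ - (j:ℝ)*e < e := by
      have : τ < ((j:ℝ)+1)*e := (div_lt_iff₀ he0).1 hj2
      linarith
    have hjeB : (j:ℝ)*e ≤ B := le_trans hje_le hτB
    have hjenn : (0:ℝ) ≤ (j:ℝ)*e := by positivity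
    have hup := up j hjeB
    have hlip := hLip ((j:ℝ)*e) ⟨by linarith, hjeB⟩ τ ⟨hτA, hτB⟩
    have habs : |τ - (j:ℝ)*e| ≤ δ := by
      rw [abs_of_nonneg (by linarith)]; linarith
    have hjcount : (j:ℝ) ≤ (B - A + 1)/e := by
      rw [le_div_iff₀ he0]
      calc (j:ℝ)*e ≤ τ := hje_le
        _ ≤ B - A + 1 := by linarith
    calc ‖f τ - f 0‖ ≤ ‖f τ - f ((j:ℝ)*e)‖ + ‖f ((j:ℝ)*e) - f 0‖ := by
          rw [← sub_add_sub_cancel (f τ) (f ((j:ℝ)*e)) (f 0)]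
          exact norm_add_le _ _
      _ ≤ L*δ + ((B - A + 1) * 81 / δ^3) * D := by
          refine add_le_add ?_ (le_trans hup (key j hjcount))
          calc ‖f τ - f ((j:ℝ)*e)‖ ≤ L * |τ - (j:ℝ)*e| := hlip
            _ ≤ L * δ := mul_le_mul_of_nonneg_left habs hL
  · set j := ⌊(-τ)/e⌋₊ with hjdef
    have hτn : 0 ≤ -τ := by linarith
    have hj1 : (j:ℝ) ≤ (-τ)/e := Nat.floor_le (by positivity)
    have hj2 : (-τ)/e < (j:ℝ)+1 := Nat.lt_floor_add_one _
    have hje_le : (j:ℝ)*e ≤ -τ := (le_div_iff₀ he0).1 hj1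
    have hτje : -τ - (j:ℝ)*e < e := by
      have : -τ < ((j:ℝ)+1)*e := (div_lt_iff₀ he0).1 hj2
      linarith
    have hjeA : A ≤ -((j:ℝ)*e) := by linarith
    have hjenn : (0:ℝ) ≤ (j:ℝ)*e := by positivity
    have hdn := dn j hjeA
    have hlip := hLip (-((j:ℝ)*e)) ⟨hjeA, by linarith⟩ τ ⟨hτA, hτB⟩
    have habs : |τ - (-((j:ℝ)*e))| ≤ δ := by
      rw [abs_of_nonpos (by linarith)]; linarith
    have hjcount : (j:ℝ) ≤ (B - A + 1)/e := by
      rw [le_div_iff₀ he0]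
      calc (j:ℝ)*e ≤ -τ := hje_le
        _ ≤ B - A + 1 := by linarith
    calc ‖f τ - f 0‖ ≤ ‖f τ - f (-((j:ℝ)*e))‖ + ‖f (-((j:ℝ)*e)) - f 0‖ := by
          rw [← sub_add_sub_cancel (f τ) (f (-((j:ℝ)*e))) (f 0)]
          exact norm_add_le _ _
      _ ≤ L*δ + ((B - A + 1) * 81 / δ^3) * D := by
          refine add_le_add ?_ (le_trans hdn (key j hjcount))
          calc ‖f τ - f (-((j:ℝ)*e))‖ ≤ L * |τ - (-((j:ℝ)*e))| := hlip
            _ ≤ L * δ := mul_le_mul_of_nonneg_left habs hL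


lemma norm_iter_open (g : ℝ → ℂ) (n : ℕ) {x : ℝ} (hx : x ∈ Set.Ioi (0:ℝ)) :
    ‖iteratedFDerivWithin ℝ n g (Set.Ioi 0) x‖ = ‖iteratedDeriv n g x‖ := by
  rw [iteratedFDerivWithin_of_isOpen n isOpen_Ioi hx,
    norm_iteratedFDeriv_eq_norm_iteratedDeriv]

lemma contDiffOn_iteratedDeriv (g : ℝ → ℂ) (h : ContDiffOn ℝ (⊤:ℕ∞) g (Set.Ioi 0)) :
    ∀ n : ℕ, ContDiffOn ℝ (⊤:ℕ∞) (iteratedDeriv n g) (Set.Ioi 0) := by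
  intro n
  induction n with
  | zero => simpa [iteratedDeriv_zero] using h
  | succ n ih =>
    rw [iteratedDeriv_succ]
    exact ih.deriv_of_isOpen isOpen_Ioi (by exact_mod_cast le_top)

lemma iter_hasDerivAt (g : ℝ → ℂ) (h : ContDiffOn ℝ (⊤:ℕ∞) g (Set.Ioi 0)) (n : ℕ)
    {x : ℝ} (hx : x ∈ Set.Ioi (0:ℝ)) :
    HasDerivAt (iteratedDeriv n g) (iteratedDeriv (n+1) g x) x := by
  have hc : ContDiffAt ℝ (⊤:ℕ∞) (iteratedDeriv n g) x :=
    (contDiffOn_iteratedDeriv g h n).contDiffAt (isOpen_Ioi.mem_nhds hx)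
  have hd : DifferentiableAt ℝ (iteratedDeriv n g) x :=
    hc.differentiableAt (by simp)
  rw [iteratedDeriv_succ]
  exact hd.hasDerivAt

/-- If a moderate net is negligible at order 0 then it is negligible at all orders. -/
lemma upgrade (w : ℝ → ℝ → ℂ)
    (hsm : ∀ ε ∈ Set.Ioc (0:ℝ) 1, ContDiffOn ℝ (⊤:ℕ∞) (w ε) (Set.Ioi 0))
    (hmod : ∀ K : Set ℝ, IsCompact K → K ⊆ Set.Ioi 0 → ∀ n : ℕ, ∃ N : ℕ, ∃ C : ℝ, ∃ ε₀ : ℝ,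
      0 < ε₀ ∧ ∀ ε : ℝ, 0 < ε → ε < ε₀ → ∀ x ∈ K,
        ‖iteratedFDerivWithin ℝ n (w ε) (Set.Ioi 0) x‖ ≤ C * ε ^ (-(N:ℤ)))
    (h0 : ∀ K : Set ℝ, IsCompact K → K ⊆ Set.Ioi 0 → ∀ m : ℕ, ∃ C : ℝ, ∃ ε₀ : ℝ,
      0 < ε₀ ∧ ∀ ε : ℝ, 0 < ε → ε < ε₀ → ∀ x ∈ K, ‖w ε x‖ ≤ C * ε ^ m) :
    ∀ K : Set ℝ, IsCompact K → K ⊆ Set.Ioi 0 → ∀ n m : ℕ, ∃ C : ℝ, ∃ ε₀ : ℝ,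
      0 < ε₀ ∧ ∀ ε : ℝ, 0 < ε → ε < ε₀ → ∀ x ∈ K,
        ‖iteratedFDerivWithin ℝ n (w ε) (Set.Ioi 0) x‖ ≤ C * ε ^ m := by
  have claim : ∀ n : ℕ, ∀ K : Set ℝ, IsCompact K → K ⊆ Set.Ioi 0 → ∀ m : ℕ,
      ∃ C : ℝ, ∃ ε₀ : ℝ, 0 < ε₀ ∧ ∀ ε : ℝ, 0 < ε → ε < ε₀ → ∀ x ∈ K,
        ‖iteratedDeriv n (w ε) x‖ ≤ C * ε ^ m := by
    intro n
    induction n with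
    | zero =>
      intro K hK hKs m
      obtain ⟨C, ε₀, hε₀, H⟩ := h0 K hK hKs m
      exact ⟨C, ε₀, hε₀, fun ε hε hε' x hx => by
        simpa [iteratedDeriv_zero] using H ε hε hε' x hx⟩
    | succ n ih =>
      intro K hK hKs m
      rcases K.eq_empty_or_nonempty with hKe | hne
      · refine ⟨0, 1, one_pos, ?_⟩
        intro ε _ _ x hx
        rw [hKe] at hx
        exact absurd hx (notMem_empty x)
      · -- enclose K in [a, b+1] ⊆ Ioi 0
        set a := sInf K with hadef
        set b := sSup K with hbdef
        have haK : a ∈ K := hK.sInf_mem hne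
        have hbK : b ∈ K := hK.sSup_mem hne
        have ha0 : 0 < a := hKs haK
        have hKab : ∀ x ∈ K, a ≤ x ∧ x ≤ b := fun x hx =>
          ⟨csInf_le hK.bddBelow hx, le_csSup hK.bddAbove hx⟩
        set K' : Set ℝ := Icc a (b+1) with hK'def
        have hK'c : IsCompact K' := isCompact_Icc
        have hK's : K' ⊆ Set.Ioi 0 := fun y hy => lt_of_lt_of_le ha0 hy.1
        obtain ⟨N, C₂, ε₂, hε₂, H₂⟩ := hmod K' hK'c hK's (n+2)
        obtain ⟨C₁, ε₁, hε₁, H₁⟩ := ih K' hK'c hK's (2*m + N + 1)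
        set C₁' := max C₁ 0 with hC₁'def
        set C₂' := max C₂ 0 with hC₂'def
        refine ⟨2*C₁' + C₂', min (min ε₁ ε₂) 1, by positivity, ?_⟩
        intro ε hε0 hεlt x hx
        have hεle1 : ε ≤ 1 := le_of_lt (lt_of_lt_of_le hεlt (le_trans (min_le_right _ _) le_rfl))
        have hε1' : ε < ε₁ := lt_of_lt_of_le hεlt (le_trans (min_le_left _ _) (min_le_left _ _))
        have hε2' : ε < ε₂ := lt_of_lt_of_le hεlt (le_trans (min_le_left _ _) (min_le_right _ _))
        have hw : ContDiffOn ℝ (⊤:ℕ∞) (w ε) (Set.Ioi 0) := hsm ε ⟨hε0, hεle1⟩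
        set h : ℝ := ε ^ (m + N + 1) with hhdef
        have hh0 : 0 < h := by positivity
        have hh1 : h ≤ 1 := pow_le_one₀ hε0.le hεle1
        have hxab := hKab x hx
        have hsub : Icc x (x+h) ⊆ K' := by
          intro y hy
          exact ⟨le_trans hxab.1 hy.1, le_trans hy.2 (by linarith [hxab.2])⟩
        have hsubΩ : Icc x (x+h) ⊆ Set.Ioi 0 := fun y hy => hK's (hsub hy)
        set d := iteratedDeriv (n+1) (w ε) x with hddef
        set M₂ : ℝ := C₂' * ε ^ (-(N:ℤ)) with hM₂def
        have hM₂0 : 0 ≤ M₂ := by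
          have : (0:ℝ) ≤ ε ^ (-(N:ℤ)) := by positivity
          have : (0:ℝ) ≤ C₂' := le_max_right _ _
          positivity
        -- first MVT : iteratedDeriv (n+1) is M₂-Lipschitz on Icc x (x+h)
        have mvt1 : ∀ y ∈ Icc x (x+h),
            ‖iteratedDeriv (n+1) (w ε) y - d‖ ≤ M₂ * ‖y - x‖ := by
          intro y hy
          refine (convex_Icc x (x+h)).norm_image_sub_le_of_norm_hasDerivWithin_le
            (f' := iteratedDeriv (n+2) (w ε)) ?_ ?_ (left_mem_Icc.2 (by linarith)) hy
          · intro z hz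
            exact (iter_hasDerivAt (w ε) hw (n+1) (hsubΩ hz)).hasDerivWithinAt
          · intro z hz
            have := H₂ ε hε0 hε2' z (hsub hz)
            rw [norm_iter_open (w ε) (n+2) (hsubΩ hz)] at this
            calc ‖iteratedDeriv (n+2) (w ε) z‖ ≤ C₂ * ε ^ (-(N:ℤ)) := this
              _ ≤ M₂ := by
                  rw [hM₂def]
                  have : (0:ℝ) ≤ ε ^ (-(N:ℤ)) := by positivity
                  exact mul_le_mul_of_nonneg_right (le_max_left _ _) this
        -- second MVT for G y = g y - (y-x)•d
        set g := iteratedDeriv n (w ε) with hgdef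
        set G : ℝ → ℂ := fun y => g y - (y - x) • d with hGdef
        have mvt2 : ‖G (x+h) - G x‖ ≤ (M₂ * h) * ‖(x+h) - x‖ := by
          refine (convex_Icc x (x+h)).norm_image_sub_le_of_norm_hasDerivWithin_le
            (f' := fun y => iteratedDeriv (n+1) (w ε) y - d) ?_ ?_
            (left_mem_Icc.2 (by linarith)) (right_mem_Icc.2 (by linarith))
          · intro z hz
            have h1 : HasDerivAt g (iteratedDeriv (n+1) (w ε) z) z :=
              iter_hasDerivAt (w ε) hw n (hsubΩ hz)
            have h2 : HasDerivAt (fun y : ℝ => (y - x) • d) ((1:ℝ) • d) z :=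
              ((hasDerivAt_id z).sub_const x).smul_const d
            rw [one_smul] at h2
            exact (h1.sub h2).hasDerivWithinAt (s := Icc x (x+h))
          · intro z hz
            calc ‖iteratedDeriv (n+1) (w ε) z - d‖ ≤ M₂ * ‖z - x‖ := mvt1 z hz
              _ ≤ M₂ * h := by
                  refine mul_le_mul_of_nonneg_left ?_ hM₂0
                  rw [Real.norm_eq_abs, abs_of_nonneg (by linarith [hz.1])]
                  linarith [hz.2]
        -- algebra
        have hGx : G x = g x := by simp [hGdef]
        have hGxh : G (x+h) = g (x+h) - h • d := by
          simp only [hGdef]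
          congr 2
          ring_nf
        have hd_bound : h * ‖d‖ ≤ M₂ * h * h + 2 * (C₁' * ε ^ (2*m + N + 1)) := by
          have e1 : ‖h • d‖ = h * ‖d‖ := by
            rw [norm_smul, Real.norm_eq_abs, abs_of_pos hh0]
          have e2 : ‖(x+h) - x‖ = h := by
            rw [Real.norm_eq_abs]
            rw [show x + h - x = h by ring, abs_of_pos hh0]
          have e3 : ‖g (x+h) - g x - h • d‖ ≤ M₂ * h * h := by
            have := mvt2
            rw [hGxh, hGx, e2] at this
            calc ‖g (x+h) - g x - h • d‖ = ‖g (x+h) - h • d - g x‖ := by ring_nf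
              _ ≤ M₂ * h * h := this
          have e4 : ‖g (x+h)‖ ≤ C₁' * ε ^ (2*m + N + 1) := by
            have := H₁ ε hε0 hε1' (x+h) (hsub (right_mem_Icc.2 (by linarith)))
            calc ‖g (x+h)‖ ≤ C₁ * ε ^ (2*m + N + 1) := this
              _ ≤ C₁' * ε ^ (2*m + N + 1) := by
                  have : (0:ℝ) ≤ ε ^ (2*m+N+1) := by positivity
                  exact mul_le_mul_of_nonneg_right (le_max_left _ _) this
          have e5 : ‖g x‖ ≤ C₁' * ε ^ (2*m + N + 1) := by
            have := H₁ ε hε0 hε1' x (hsub (left_mem_Icc.2 (by linarith)))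
            calc ‖g x‖ ≤ C₁ * ε ^ (2*m + N + 1) := this
              _ ≤ C₁' * ε ^ (2*m + N + 1) := by
                  have : (0:ℝ) ≤ ε ^ (2*m+N+1) := by positivity
                  exact mul_le_mul_of_nonneg_right (le_max_left _ _) this
          calc h * ‖d‖ = ‖h • d‖ := e1.symm
            _ = ‖(g (x+h) - g x - h • d) - (g (x+h) - g x)‖ := by
                rw [show (g (x+h) - g x - h • d) - (g (x+h) - g x) = -(h • d) by abel,
                  norm_neg]
            _ ≤ ‖g (x+h) - g x - h • d‖ + ‖g (x+h) - g x‖ := norm_sub_le _ _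
            _ ≤ M₂ * h * h + (‖g (x+h)‖ + ‖g x‖) := by
                refine add_le_add e3 (norm_sub_le _ _)
            _ ≤ M₂ * h * h + 2 * (C₁' * ε ^ (2*m + N + 1)) := by
                refine add_le_add le_rfl ?_
                linarith [e4, e5]
        -- conclude
        have hεne : ε ≠ 0 := ne_of_gt hε0
        have hzpow : ε ^ (-(N:ℤ)) = (ε ^ N)⁻¹ := by
          rw [zpow_neg, zpow_natCast]
        have hcalc1 : M₂ * h = C₂' * ε ^ (m+1) := by
          rw [hM₂def, hhdef, hzpow]
          rw [show m + N + 1 = N + (m+1) by ring, pow_add]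
          field_simp
        have hcalc2 : ε ^ (2*m + N + 1) = h * ε ^ m := by
          rw [hhdef, ← pow_add]
          congr 1
          ring
        have hfinal : ‖d‖ ≤ (2*C₁' + C₂') * ε ^ m := by
          have hC₂'0 : (0:ℝ) ≤ C₂' := le_max_right _ _
          have h1 : h * ‖d‖ ≤ C₂' * ε ^ (m+1) * h + 2 * C₁' * (h * ε ^ m) := by
            calc h * ‖d‖ ≤ M₂ * h * h + 2 * (C₁' * ε ^ (2*m + N + 1)) := hd_bound
              _ = C₂' * ε ^ (m+1) * h + 2 * C₁' * (h * ε ^ m) := by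
                  rw [hcalc1, hcalc2]; ring
          have h2 : C₂' * ε ^ (m+1) ≤ C₂' * ε ^ m := by
            refine mul_le_mul_of_nonneg_left ?_ hC₂'0
            exact pow_le_pow_of_le_one hε0.le hεle1 (by omega)
          have h3 : h * ‖d‖ ≤ (2*C₁' + C₂') * ε ^ m * h := by
            calc h * ‖d‖ ≤ C₂' * ε ^ (m+1) * h + 2 * C₁' * (h * ε ^ m) := h1
              _ ≤ C₂' * ε ^ m * h + 2 * C₁' * (h * ε ^ m) := by
                  refine add_le_add (mul_le_mul_of_nonneg_right h2 hh0.le) le_rfl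
              _ = (2*C₁' + C₂') * ε ^ m * h := by ring
          have h4 : h * ‖d‖ ≤ h * ((2*C₁' + C₂') * ε ^ m) := by
            calc h * ‖d‖ ≤ (2*C₁' + C₂') * ε ^ m * h := h3
              _ = h * ((2*C₁' + C₂') * ε ^ m) := by ring
          exact le_of_mul_le_mul_left h4 hh0
        exact hfinal
  intro K hK hKs n m
  obtain ⟨C, ε₀, hε₀, H⟩ := claim n K hK hKs m
  refine ⟨C, ε₀, hε₀, ?_⟩
  intro ε hε hε' x hx
  rw [norm_iter_open (w ε) n (hKs hx)]
  exact H ε hε hε' x hx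


set_option maxHeartbeats 1600000 in
lemma stepA (α : ℝ) (u : ℝ → ℝ → ℂ)
    (husm : ∀ ε ∈ Set.Ioc (0:ℝ) 1, ContDiffOn ℝ (⊤:ℕ∞) (u ε) (Set.Ioi 0))
    (humod : ∀ K : Set ℝ, IsCompact K → K ⊆ Set.Ioi 0 → ∀ n : ℕ, ∃ N : ℕ, ∃ C : ℝ,
      ∃ ε₀ : ℝ, 0 < ε₀ ∧ ∀ ε : ℝ, 0 < ε → ε < ε₀ → ∀ x ∈ K,
        ‖iteratedFDerivWithin ℝ n (u ε) (Set.Ioi 0) x‖ ≤ C * ε ^ (-(N:ℤ)))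
    (hhom0 : ∀ lam : ℝ, 0 < lam → ∀ K : Set ℝ, IsCompact K → K ⊆ Set.Ioi 0 → ∀ m : ℕ,
      ∃ C : ℝ, ∃ ε₀ : ℝ, 0 < ε₀ ∧ ∀ ε : ℝ, 0 < ε → ε < ε₀ → ∀ x ∈ K,
        ‖u ε (lam * x) - ((lam ^ α : ℝ) : ℂ) * u ε x‖ ≤ C * ε ^ m) :
    ∀ K : Set ℝ, IsCompact K → K ⊆ Set.Ioi 0 → ∀ m : ℕ, ∃ C : ℝ, ∃ ε₀ : ℝ, 0 < ε₀ ∧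
      ∀ ε : ℝ, 0 < ε → ε < ε₀ → ∀ x ∈ K,
        ‖u ε x - u ε 1 * ((x ^ α : ℝ) : ℂ)‖ ≤ C * ε ^ m := by
  intro K hK hKs m
  rcases K.eq_empty_or_nonempty with hKe | hne
  · exact ⟨0, 1, one_pos, fun ε _ _ x hx => absurd (hKe ▸ hx) (notMem_empty x)⟩
  have haK : sInf K ∈ K := hK.sInf_mem hne
  have hbK : sSup K ∈ K := hK.sSup_mem hne
  set a' : ℝ := min (sInf K) 1 with ha'def
  set b' : ℝ := max (sSup K) 1 with hb'def
  have ha'0 : 0 < a' := lt_min (hKs haK) one_pos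
  have ha'b' : a' ≤ b' := le_trans (min_le_right _ _) (le_max_right _ _)
  have hxmem : ∀ x ∈ K, a' ≤ x ∧ x ≤ b' := fun x hx =>
    ⟨le_trans (min_le_left _ _) (csInf_le hK.bddBelow hx),
     le_trans (le_csSup hK.bddAbove hx) (le_max_left _ _)⟩
  set A : ℝ := Real.log a' with hAdef
  set B : ℝ := Real.log b' with hBdef
  have hA0 : A ≤ 0 := Real.log_nonpos ha'0.le (min_le_right _ _)
  have hB0 : 0 ≤ B := Real.log_nonneg (le_max_right _ _)
  have hAB : A ≤ B := by
    rw [hAdef, hBdef]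
    exact Real.log_le_log ha'0 ha'b'
  -- the conjugated function
  set f : ℝ → ℝ → ℂ := fun ε t => ((Real.exp (-α*t) : ℝ) : ℂ) * u ε (Real.exp t) with hfdef
  -- shift identity
  have key : ∀ ε s t : ℝ, f ε (t+s) - f ε t
      = ((Real.exp (-α*(t+s)) : ℝ) : ℂ) *
        (u ε (Real.exp s * Real.exp t) - ((Real.exp s ^ α : ℝ):ℂ) * u ε (Real.exp t)) := by
    intro ε s t
    have h1 : Real.exp s * Real.exp t = Real.exp (t+s) := by
      rw [← Real.exp_add]; ring_nf
    have h2 : Real.exp (-α*(t+s)) * (Real.exp s ^ α) = Real.exp (-α*t) := by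
      rw [Real.rpow_def_of_pos (Real.exp_pos s), Real.log_exp, ← Real.exp_add]
      ring_nf
    simp only [hfdef]
    rw [h1, mul_sub]
    congr 1
    rw [← mul_assoc, ← Complex.ofReal_mul, h2]
  -- compacts
  set K₁ : Set ℝ := Icc a' b' with hK₁def
  have hK₁c : IsCompact K₁ := isCompact_Icc
  have hK₁s : K₁ ⊆ Set.Ioi 0 := fun y hy => lt_of_lt_of_le ha'0 hy.1
  set K₂ : Set ℝ := Icc (Real.exp (A-2)) (Real.exp (B+1)) with hK₂def
  have hK₂c : IsCompact K₂ := isCompact_Icc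
  have hK₂s : K₂ ⊆ Set.Ioi 0 := fun y hy => lt_of_lt_of_le (Real.exp_pos _) hy.1
  -- moderateness data for the Lipschitz bound
  obtain ⟨N₀, C₀, εL0, hεL0, HL0⟩ := humod K₂ hK₂c hK₂s 0
  obtain ⟨N₁, C₁, εL1, hεL1, HL1⟩ := humod K₂ hK₂c hK₂s 1
  set N : ℕ := N₀ + N₁ + 1 with hNdef
  set C₀' : ℝ := max C₀ 0 with hC₀'def
  set C₁' : ℝ := max C₁ 0 with hC₁'def
  set Cbig : ℝ := Real.exp (|α| * (|A| + |B|+5)) with hCbigdef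
  set Lc : ℝ := Cbig * (|α| * C₀' + Real.exp (B+1) * C₁') with hLcdef
  have hLc0 : 0 ≤ Lc := by
    have h1 : (0:ℝ) ≤ C₀' := le_max_right _ _
    have h2 : (0:ℝ) ≤ C₁' := le_max_right _ _
    have := (Real.exp_pos (B+1)).le
    have := (Real.exp_pos (|α| * (|A| + |B|+5))).le
    positivity
  set M : ℕ := N + m + 1 with hMdef
  set m' : ℕ := m + 3*M with hm'def
  -- homogeneity data
  obtain ⟨Cd1, εD1, hεD1, HD1⟩ := hhom0 (Real.exp 1) (Real.exp_pos 1) K₂ hK₂c hK₂s m'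
  obtain ⟨Cd2, εD2, hεD2, HD2⟩ := hhom0 (Real.exp gr) (Real.exp_pos gr) K₂ hK₂c hK₂s m'
  set Cd' : ℝ := max (max Cd1 Cd2) 0 with hCd'def
  have hCd'0 : 0 ≤ Cd' := le_max_right _ _
  set Cx : ℝ := Real.exp (|α| * (|A| + |B|)) with hCxdef
  refine ⟨Cx * (Lc + 81*(B-A+1)*Cbig*Cd'), min (min εL0 εL1) (min (min εD1 εD2) (1/2)),
    by positivity, ?_⟩
  intro ε hε0 hεlt x hx
  have hεL0' : ε < εL0 := lt_of_lt_of_le hεlt (le_trans (min_le_left _ _) (min_le_left _ _))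
  have hεL1' : ε < εL1 := lt_of_lt_of_le hεlt (le_trans (min_le_left _ _) (min_le_right _ _))
  have hεD1' : ε < εD1 := lt_of_lt_of_le hεlt
    (le_trans (min_le_right _ _) (le_trans (min_le_left _ _) (min_le_left _ _)))
  have hεD2' : ε < εD2 := lt_of_lt_of_le hεlt
    (le_trans (min_le_right _ _) (le_trans (min_le_left _ _) (min_le_right _ _)))
  have hεhalf : ε < 1/2 := lt_of_lt_of_le hεlt
    (le_trans (min_le_right _ _) (min_le_right _ _))
  have hεle1 : ε ≤ 1 := by linarith
  have hεne : ε ≠ 0 := ne_of_gt hε0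
  -- membership helpers
  have hmem2 : ∀ t ∈ Icc (A-2) (B+1), Real.exp t ∈ K₂ := by
    intro t ht
    exact ⟨Real.exp_le_exp.2 ht.1, Real.exp_le_exp.2 ht.2⟩
  have hmem1 : ∀ t ∈ Icc A B, Real.exp t ∈ K₂ := by
    intro t ht
    exact hmem2 t ⟨by linarith [ht.1], by linarith [ht.2]⟩
  -- exp factor bounds
  have habs_t : ∀ t ∈ Icc (A-2) (B+1), ∀ s : ℝ, |s| ≤ 2 →
      Real.exp (-α*(t+s)) ≤ Cbig := by
    intro t ht s hs
    rw [hCbigdef]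
    apply Real.exp_le_exp.2
    have h1 : |t| ≤ |A| + |B| + 2 := by
      rw [abs_le]
      constructor
      · nlinarith [neg_abs_le A, le_abs_self A, ht.1, abs_nonneg B, neg_abs_le B]
      · nlinarith [le_abs_self B, ht.2, abs_nonneg A]
    calc -α*(t+s) ≤ |(-α)*(t+s)| := le_abs_self _
      _ = |α| * |t+s| := by rw [abs_mul, abs_neg]
      _ ≤ |α| * (|A| + |B|+5) := by
          refine mul_le_mul_of_nonneg_left ?_ (abs_nonneg α)
          calc |t+s| ≤ |t| + |s| := abs_add_le _ _
            _ ≤ (|A| + |B| + 2) + 2 := add_le_add h1 hs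
            _ ≤ |A| + |B|+5 := by linarith
  -- D bound for both shifts
  set D : ℝ := Cbig * (Cd' * ε ^ m') with hDdef
  have hDbound : ∀ s : ℝ, |s| ≤ 2 →
      (∀ y ∈ K₂, ‖u ε (Real.exp s * y) - ((Real.exp s ^ α : ℝ):ℂ) * u ε y‖ ≤ Cd' * ε ^ m') →
      ∀ t ∈ Icc (A-2) (B+1), ‖f ε (t+s) - f ε t‖ ≤ D := by
    intro s hs hbound t ht
    rw [key ε s t, hDdef]
    rw [norm_mul, Complex.norm_real, Real.norm_eq_abs,
      abs_of_pos (Real.exp_pos _)]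
    exact mul_le_mul (habs_t t ht s hs) (hbound (Real.exp t) (hmem2 t ht))
      (norm_nonneg _) (by rw [hCbigdef]; positivity)
  have h1D : ∀ t ∈ Icc (A-2) (B+1), ‖f ε (t+1) - f ε t‖ ≤ D := by
    refine hDbound 1 (by rw [abs_one]; norm_num) ?_
    intro y hy
    calc ‖u ε (Real.exp 1 * y) - ((Real.exp 1 ^ α : ℝ):ℂ) * u ε y‖
        ≤ Cd1 * ε ^ m' := HD1 ε hε0 hεD1' y hy
      _ ≤ Cd' * ε ^ m' := by
          refine mul_le_mul_of_nonneg_right ?_ (by positivity)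
          exact le_trans (le_max_left _ _) (le_max_left _ _)
  have hgD : ∀ t ∈ Icc (A-2) (B+1), ‖f ε (t+gr) - f ε t‖ ≤ D := by
    refine hDbound gr (by rw [abs_of_pos (by linarith [gr_lb] : (0:ℝ) < gr)]; linarith [gr_ub]) ?_
    intro y hy
    calc ‖u ε (Real.exp gr * y) - ((Real.exp gr ^ α : ℝ):ℂ) * u ε y‖
        ≤ Cd2 * ε ^ m' := HD2 ε hε0 hεD2' y hy
      _ ≤ Cd' * ε ^ m' := by
          refine mul_le_mul_of_nonneg_right ?_ (by positivity)
          exact le_trans (le_max_right _ _) (le_max_left _ _)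
  -- the Lipschitz bound
  set L : ℝ := Lc * (ε^N)⁻¹ with hLdef
  have hL0 : 0 ≤ L := by positivity
  have hu_cd : ContDiffOn ℝ (⊤:ℕ∞) (u ε) (Set.Ioi 0) := husm ε ⟨hε0, hεle1⟩
  have hLip : ∀ t₁ ∈ Icc A B, ∀ t₂ ∈ Icc A B, ‖f ε t₂ - f ε t₁‖ ≤ L * |t₂ - t₁| := by
    intro t₁ ht₁ t₂ ht₂
    have hderiv : ∀ t ∈ Icc A B, HasDerivWithinAt (f ε)
        (((Real.exp (-α*t) * (-α) : ℝ) : ℂ) * u ε (Real.exp t)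
          + ((Real.exp (-α*t) : ℝ) : ℂ) * (Real.exp t • deriv (u ε) (Real.exp t)))
        (Icc A B) t := by
      intro t ht
      have hexpt_pos : Real.exp t ∈ Set.Ioi (0:ℝ) := Real.exp_pos t
      have hlin : HasDerivAt (fun y : ℝ => -α * y) (-α) t := by
        simpa using (hasDerivAt_id t).const_mul (-α)
      have hc : HasDerivAt (fun y : ℝ => ((Real.exp (-α*y) : ℝ) : ℂ))
          ((Real.exp (-α*t) * (-α) : ℝ) : ℂ) t := (hlin.exp).ofReal_comp
      have hud : DifferentiableAt ℝ (u ε) (Real.exp t) :=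
        (hu_cd.contDiffAt (isOpen_Ioi.mem_nhds hexpt_pos)).differentiableAt
          (by simp)
      have hv : HasDerivAt (fun y : ℝ => u ε (Real.exp y))
          (Real.exp t • deriv (u ε) (Real.exp t)) t :=
        (hud.hasDerivAt).scomp t (Real.hasDerivAt_exp t)
      exact ((hc.mul hv).hasDerivWithinAt)
    have hbound : ∀ t ∈ Icc A B, ‖((Real.exp (-α*t) * (-α) : ℝ) : ℂ) * u ε (Real.exp t)
          + ((Real.exp (-α*t) : ℝ) : ℂ) * (Real.exp t • deriv (u ε) (Real.exp t))‖ ≤ L := by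
      intro t ht
      have hexp_mem := hmem1 t ht
      have hu0 : ‖u ε (Real.exp t)‖ ≤ C₀' * ε ^ (-(N₀:ℤ)) := by
        have := HL0 ε hε0 hεL0' (Real.exp t) hexp_mem
        rw [norm_iteratedFDerivWithin_zero] at this
        refine le_trans this (mul_le_mul_of_nonneg_right (le_max_left _ _) (by positivity))
      have hu1 : ‖deriv (u ε) (Real.exp t)‖ ≤ C₁' * ε ^ (-(N₁:ℤ)) := by
        have h := HL1 ε hε0 hεL1' (Real.exp t) hexp_mem
        rw [norm_iter_open (u ε) 1 (Real.exp_pos t), iteratedDeriv_one] at h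
        refine le_trans h (mul_le_mul_of_nonneg_right (le_max_left _ _) (by positivity))
      have hzN : ∀ j : ℕ, j ≤ N → (ε:ℝ) ^ (-(j:ℤ)) ≤ (ε^N)⁻¹ := by
        intro j hj
        rw [zpow_neg, zpow_natCast]
        exact inv_anti₀ (by positivity) (pow_le_pow_of_le_one hε0.le hεle1 hj)
      have hexp_le : Real.exp (-α*t) ≤ Cbig := by
        have := habs_t t ⟨by linarith [ht.1], by linarith [ht.2]⟩ 0 (by simp)
        simpa using this
      have hexp_t_le : Real.exp t ≤ Real.exp (B+1) := Real.exp_le_exp.2 (by linarith [ht.2])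
      calc ‖((Real.exp (-α*t) * (-α) : ℝ) : ℂ) * u ε (Real.exp t)
            + ((Real.exp (-α*t) : ℝ) : ℂ) * (Real.exp t • deriv (u ε) (Real.exp t))‖
          ≤ ‖((Real.exp (-α*t) * (-α) : ℝ) : ℂ) * u ε (Real.exp t)‖
            + ‖((Real.exp (-α*t) : ℝ) : ℂ) * (Real.exp t • deriv (u ε) (Real.exp t))‖ :=
            norm_add_le _ _
        _ ≤ (Real.exp (-α*t) * |α|) * ‖u ε (Real.exp t)‖
            + Real.exp (-α*t) * (Real.exp t * ‖deriv (u ε) (Real.exp t)‖) := by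
            rw [norm_mul, norm_mul, Complex.norm_real, Complex.norm_real,
              norm_smul, Real.norm_eq_abs, Real.norm_eq_abs, Real.norm_eq_abs,
              abs_mul, abs_of_pos (Real.exp_pos _), abs_neg, abs_of_pos (Real.exp_pos _)]
        _ ≤ (Cbig * |α|) * (C₀' * ε ^ (-(N₀:ℤ)))
            + Cbig * (Real.exp (B+1) * (C₁' * ε ^ (-(N₁:ℤ)))) := by
            have e0 : (0:ℝ) ≤ Real.exp (-α*t) := (Real.exp_pos _).le
            have e1 : (0:ℝ) ≤ C₀' := le_max_right _ _
            have e2 : (0:ℝ) ≤ C₁' := le_max_right _ _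
            refine add_le_add ?_ ?_
            · refine mul_le_mul (mul_le_mul_of_nonneg_right hexp_le (abs_nonneg α)) hu0
                (norm_nonneg _) ?_
              rw [hCbigdef]; positivity
            · refine mul_le_mul hexp_le ?_ (by positivity) (by rw [hCbigdef]; positivity)
              refine mul_le_mul hexp_t_le hu1 (norm_nonneg _) (Real.exp_pos _).le
        _ ≤ (Cbig * |α|) * (C₀' * (ε^N)⁻¹) + Cbig * (Real.exp (B+1) * (C₁' * (ε^N)⁻¹)) := by
            have e1 : (0:ℝ) ≤ C₀' := le_max_right _ _
            have e2 : (0:ℝ) ≤ C₁' := le_max_right _ _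
            have f1 := hzN N₀ (by omega)
            have f2 := hzN N₁ (by omega)
            have g0 : (0:ℝ) ≤ Cbig * |α| := by rw [hCbigdef]; positivity
            have g1 : (0:ℝ) ≤ Cbig := by rw [hCbigdef]; positivity
            refine add_le_add ?_ ?_
            · exact mul_le_mul_of_nonneg_left (mul_le_mul_of_nonneg_left f1 e1) g0
            · refine mul_le_mul_of_nonneg_left ?_ g1
              exact mul_le_mul_of_nonneg_left (mul_le_mul_of_nonneg_left f2 e2) (Real.exp_pos _).le
        _ = L := by rw [hLdef, hLcdef]; ring
    have := (convex_Icc A B).norm_image_sub_le_of_norm_hasDerivWithin_le hderiv hbound ht₁ ht₂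
    rwa [Real.norm_eq_abs] at this
  -- apply the approximation lemma
  set δ : ℝ := ε ^ M with hδdef
  have hδ0 : 0 < δ := by positivity
  have hδhalf : δ < 1/2 := by
    have : δ ≤ ε := by
      rw [hδdef]
      calc ε ^ M ≤ ε ^ 1 := pow_le_pow_of_le_one hε0.le hεle1 (by omega)
        _ = ε := pow_one ε
    linarith
  have happrox := approx (f ε) A B D L δ hA0 hB0 h1D hgD hLip hL0 hδ0 hδhalf
  -- compute the bound
  have hLδ : L * δ ≤ Lc * ε ^ m := by
    rw [hLdef, hδdef, hMdef]
    have hεN : (ε:ℝ)^N ≠ 0 := pow_ne_zero _ hεne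
    have : Lc * (ε ^ N)⁻¹ * ε ^ (N + m + 1) = Lc * (ε ^ m * ε) := by
      field_simp
      ring
    rw [this]
    calc Lc * (ε^m * ε) ≤ Lc * (ε^m * 1) :=
          mul_le_mul_of_nonneg_left
            (mul_le_mul_of_nonneg_left hεle1 (pow_nonneg hε0.le m)) hLc0
      _ = Lc * ε^m := by ring
  have hDδ : ((B - A + 1) * 81 / δ^3) * D = 81*(B-A+1)*Cbig*Cd' * ε ^ m := by
    rw [hDdef, hδdef, hm'def]
    have h3M : (ε ^ M)^3 = ε ^ (3*M) := by rw [← pow_mul]; ring_nf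
    rw [h3M]
    have hpow : ε ^ (m + 3*M) = ε ^ (3*M) * ε ^ m := by rw [pow_add]; ring
    rw [hpow]
    have hne3 : (ε:ℝ) ^ (3*M) ≠ 0 := pow_ne_zero _ hεne
    field_simp
  -- back to x
  have hx1 : 0 < x := hKs hx
  set τ : ℝ := Real.log x with hτdef
  have hτmem : τ ∈ Icc A B := by
    constructor
    · exact Real.log_le_log ha'0 (hxmem x hx).1
    · exact Real.log_le_log hx1 (hxmem x hx).2
  have hexpτ : Real.exp τ = x := Real.exp_log hx1
  have hf0 : f ε 0 = u ε 1 := by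
    simp [hfdef]
  have hfτ : ((x ^ α : ℝ) : ℂ) * (f ε τ - f ε 0) = u ε x - u ε 1 * ((x ^ α : ℝ) : ℂ) := by
    rw [hf0]
    simp only [hfdef, hexpτ]
    have hxa : Real.exp (-α*τ) = x ^ (-α) := by
      rw [Real.rpow_def_of_pos hx1, hτdef]; ring_nf
    rw [hxa]
    have hxx : (x:ℝ) ^ α * x ^ (-α) = 1 := by
      rw [← Real.rpow_add hx1]; simp
    rw [mul_sub, ← mul_assoc, ← Complex.ofReal_mul, hxx]
    push_cast
    ring
  have hxα_le : |x ^ α| ≤ Cx := by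
    rw [abs_of_nonneg (Real.rpow_nonneg hx1.le α), Real.rpow_def_of_pos hx1, hCxdef]
    apply Real.exp_le_exp.2
    have hlt : |Real.log x| ≤ |A| + |B| := by
      rw [abs_le]
      constructor
      · nlinarith [neg_abs_le A, hτmem.1, abs_nonneg B]
      · nlinarith [le_abs_self B, hτmem.2, abs_nonneg A]
    calc Real.log x * α ≤ |Real.log x * α| := le_abs_self _
      _ = |α| * |Real.log x| := by rw [abs_mul]; ring
      _ ≤ |α| * (|A| + |B|) := mul_le_mul_of_nonneg_left hlt (abs_nonneg α)
  calc ‖u ε x - u ε 1 * ((x ^ α : ℝ) : ℂ)‖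
      = ‖((x ^ α : ℝ) : ℂ)‖ * ‖f ε τ - f ε 0‖ := by rw [← hfτ, norm_mul]
    _ ≤ Cx * (L*δ + ((B - A + 1) * 81 / δ^3) * D) := by
        refine mul_le_mul ?_ (happrox τ hτmem) (norm_nonneg _) ?_
        · rw [Complex.norm_real, Real.norm_eq_abs]; exact hxα_le
        · rw [hCxdef]; positivity
    _ ≤ Cx * (Lc * ε ^ m + 81*(B-A+1)*Cbig*Cd' * ε ^ m) := by
        rw [hDδ] at *
        refine mul_le_mul_of_nonneg_left ?_ (by rw [hCxdef]; positivity)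
        exact add_le_add hLδ le_rfl
    _ = Cx * (Lc + 81*(B-A+1)*Cbig*Cd') * ε ^ m := by ring


end S5

set_option maxHeartbeats 2000000 in
/-- a generalized function on ℝ⁺ homogeneous of degree `α` equals `c·x^α`
for some generalized complex number `c`. -/
theorem statement_5
    (α : ℝ) (u : ℝ → ℝ → ℂ)
    (hu : IsModerate (Set.Ioi (0:ℝ)) u)
    (hhom : ∀ lam : ℝ, 0 < lam →
      IsNegligible (Set.Ioi (0:ℝ))
        (fun ε x => u ε (lam * x) - ((lam ^ α : ℝ) : ℂ) * u ε x)) :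
    ∃ c : ℝ → ℂ, NumModerate c ∧
      IsNegligible (Set.Ioi (0:ℝ))
        (fun ε x => u ε x - c ε * ((x ^ α : ℝ) : ℂ)) := by
  classical
  obtain ⟨husm, humod⟩ := hu
  -- homogeneity at order 0
  have hhom0 : ∀ lam : ℝ, 0 < lam → ∀ K : Set ℝ, IsCompact K → K ⊆ Set.Ioi 0 → ∀ m : ℕ,
      ∃ C : ℝ, ∃ ε₀ : ℝ, 0 < ε₀ ∧ ∀ ε : ℝ, 0 < ε → ε < ε₀ → ∀ x ∈ K,
        ‖u ε (lam * x) - ((lam ^ α : ℝ) : ℂ) * u ε x‖ ≤ C * ε ^ m := by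
    intro lam hlam K hK hKs m
    obtain ⟨C, ε₀, hε₀, H⟩ := (hhom lam hlam).2 K hK hKs 0 m
    refine ⟨C, ε₀, hε₀, fun ε hε hε' x hx => ?_⟩
    have := H ε hε hε' x hx
    rwa [norm_iteratedFDerivWithin_zero] at this
  -- the generalized constant
  set c : ℝ → ℂ := fun ε => u ε 1 with hcdef
  have h1mem : ({1} : Set ℝ) ⊆ Set.Ioi 0 := by
    intro y hy
    rw [mem_singleton_iff] at hy
    simp [hy]
  obtain ⟨Nc, Cc, εc, hεc, Hc⟩ := humod {1} isCompact_singleton h1mem 0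
  have hcmod : NumModerate c := by
    refine ⟨Nc, Cc, εc, hεc, fun ε hε hε' => ?_⟩
    have := Hc ε hε hε' 1 rfl
    rwa [norm_iteratedFDerivWithin_zero] at this
  -- x ^ α as a smooth function
  set ρ : ℝ → ℂ := fun x => ((x ^ α : ℝ) : ℂ) with hρdef
  have hρsm : ContDiffOn ℝ (⊤:ℕ∞) ρ (Set.Ioi 0) := by
    intro x hx
    have h1 : ContDiffAt ℝ (⊤:ℕ∞) (fun y : ℝ => (y ^ α : ℝ)) x :=
      Real.contDiffAt_rpow_const_of_ne (ne_of_gt hx)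
    exact ((Complex.ofRealCLM.contDiff.contDiffAt).comp x h1).contDiffWithinAt
  have hUD : UniqueDiffOn ℝ (Set.Ioi (0:ℝ)) := isOpen_Ioi.uniqueDiffOn
  -- the difference net and its smoothness
  have hwsm : ∀ ε ∈ Set.Ioc (0:ℝ) 1, ContDiffOn ℝ (⊤:ℕ∞)
      (fun x => u ε x - c ε * ((x ^ α : ℝ) : ℂ)) (Set.Ioi 0) := by
    intro ε hε
    exact (husm ε hε).sub ((hρsm.const_smul (c ε)).congr (fun x _ => by
      simp [hρdef, smul_eq_mul]))
  -- moderateness of the difference net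
  have hwmod : ∀ K : Set ℝ, IsCompact K → K ⊆ Set.Ioi 0 → ∀ n : ℕ, ∃ N : ℕ, ∃ C : ℝ,
      ∃ ε₀ : ℝ, 0 < ε₀ ∧ ∀ ε : ℝ, 0 < ε → ε < ε₀ → ∀ x ∈ K,
        ‖iteratedFDerivWithin ℝ n (fun x => u ε x - c ε * ((x ^ α : ℝ) : ℂ))
          (Set.Ioi 0) x‖ ≤ C * ε ^ (-(N:ℤ)) := by
    intro K hK hKs n
    obtain ⟨N, C, ε₀, hε₀, H⟩ := humod K hK hKs n
    obtain ⟨Cρ, hCρ⟩ := hK.exists_bound_of_continuousOn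
      (hρsm.continuousOn_iteratedFDerivWithin (m := n) (by exact_mod_cast le_top) hUD
        |>.mono hKs)
    set Cρ' : ℝ := max Cρ 0 with hCρ'def
    have hCρ'0 : (0:ℝ) ≤ Cρ' := le_max_right _ _
    have hCρ' : ∀ x ∈ K, ‖iteratedFDerivWithin ℝ n ρ (Set.Ioi 0) x‖ ≤ Cρ' := fun x hx =>
      le_trans (hCρ x hx) (le_max_left _ _)
    refine ⟨N + Nc, max C 0 + max Cc 0 * Cρ', min (min ε₀ εc) 1, by positivity, ?_⟩
    intro ε hε hεlt x hx
    have hε₀' : ε < ε₀ := lt_of_lt_of_le hεlt (le_trans (min_le_left _ _) (min_le_left _ _))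
    have hεc' : ε < εc := lt_of_lt_of_le hεlt (le_trans (min_le_left _ _) (min_le_right _ _))
    have hεle1 : ε ≤ 1 := le_of_lt (lt_of_lt_of_le hεlt (min_le_right _ _))
    have hzmon : ∀ j : ℕ, j ≤ N + Nc → (ε:ℝ) ^ (-(j:ℤ)) ≤ ε ^ (-((N+Nc:ℕ):ℤ)) := by
      intro j hj
      rw [zpow_neg, zpow_neg, zpow_natCast, zpow_natCast]
      exact inv_anti₀ (by positivity) (pow_le_pow_of_le_one hε.le hεle1 hj)
    have hεpos : (0:ℝ) ≤ ε ^ (-((N+Nc:ℕ):ℤ)) := by positivity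
    -- decompose the iterated derivative
    have hsplit : iteratedFDerivWithin ℝ n (fun x => u ε x - c ε * ((x ^ α : ℝ) : ℂ))
        (Set.Ioi 0) x
        = iteratedFDerivWithin ℝ n (u ε) (Set.Ioi 0) x
          + (-(c ε)) • iteratedFDerivWithin ℝ n ρ (Set.Ioi 0) x := by
      have hcd_u : ContDiffOn ℝ n (u ε) (Set.Ioi 0) :=
        (husm ε ⟨hε, hεle1⟩).of_le (by exact_mod_cast le_top)
      have hcd_ρ : ContDiffOn ℝ n ((-(c ε)) • ρ) (Set.Ioi 0) :=
        (hρsm.const_smul (-(c ε))).of_le (by exact_mod_cast le_top)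
      have hfun : (fun x => u ε x - c ε * ((x ^ α : ℝ) : ℂ))
          = fun x => u ε x + ((-(c ε)) • ρ) x := by
        funext y
        simp [hρdef, smul_eq_mul]
        ring
      have hcd_ρ0 : ContDiffOn ℝ n ρ (Set.Ioi 0) :=
        hρsm.of_le (by exact_mod_cast le_top)
      rw [hfun, iteratedFDerivWithin_add_apply' (hcd_u x (hKs hx)) (hcd_ρ x (hKs hx)) hUD (hKs hx),
        iteratedFDerivWithin_const_smul_apply (hcd_ρ0 x (hKs hx)) hUD (hKs hx)]
    rw [hsplit]
    have hcb : ‖c ε‖ ≤ Cc * ε ^ (-(Nc:ℤ)) := by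
      have := Hc ε hε hεc' 1 rfl
      rwa [norm_iteratedFDerivWithin_zero] at this
    calc ‖iteratedFDerivWithin ℝ n (u ε) (Set.Ioi 0) x
          + (-(c ε)) • iteratedFDerivWithin ℝ n ρ (Set.Ioi 0) x‖
        ≤ ‖iteratedFDerivWithin ℝ n (u ε) (Set.Ioi 0) x‖
          + ‖(-(c ε)) • iteratedFDerivWithin ℝ n ρ (Set.Ioi 0) x‖ := norm_add_le _ _
      _ ≤ ‖iteratedFDerivWithin ℝ n (u ε) (Set.Ioi 0) x‖
          + ‖c ε‖ * ‖iteratedFDerivWithin ℝ n ρ (Set.Ioi 0) x‖ := by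
          refine add_le_add le_rfl ?_
          calc ‖(-(c ε)) • iteratedFDerivWithin ℝ n ρ (Set.Ioi 0) x‖
              ≤ ‖-(c ε)‖ * ‖iteratedFDerivWithin ℝ n ρ (Set.Ioi 0) x‖ := ContinuousMultilinearMap.opNorm_smul_le _ _
            _ = ‖c ε‖ * ‖iteratedFDerivWithin ℝ n ρ (Set.Ioi 0) x‖ := by rw [norm_neg]
      _ ≤ C * ε ^ (-(N:ℤ)) + (Cc * ε ^ (-(Nc:ℤ))) * Cρ' := by
          refine add_le_add (H ε hε hε₀' x hx) ?_
          exact mul_le_mul hcb (hCρ' x hx)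
            (norm_nonneg (iteratedFDerivWithin ℝ n ρ (Set.Ioi 0) x))
            (le_trans (norm_nonneg (c ε)) hcb)
      _ ≤ max C 0 * ε ^ (-((N+Nc:ℕ):ℤ)) + max Cc 0 * Cρ' * ε ^ (-((N+Nc:ℕ):ℤ)) := by
          refine add_le_add ?_ ?_
          · refine le_trans (mul_le_mul_of_nonneg_right (le_max_left C 0) (by positivity)) ?_
            exact mul_le_mul_of_nonneg_left (hzmon N (by omega)) (le_max_right C 0)
          · have h1 : Cc * ε ^ (-(Nc:ℤ)) * Cρ' ≤ max Cc 0 * ε ^ (-(Nc:ℤ)) * Cρ' := by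
              refine mul_le_mul_of_nonneg_right
                (mul_le_mul_of_nonneg_right (le_max_left Cc 0) (by positivity)) hCρ'0
            refine le_trans h1 ?_
            calc max Cc 0 * ε ^ (-(Nc:ℤ)) * Cρ'
                ≤ max Cc 0 * ε ^ (-((N+Nc:ℕ):ℤ)) * Cρ' := by
                  refine mul_le_mul_of_nonneg_right
                    (mul_le_mul_of_nonneg_left (hzmon Nc (by omega)) (le_max_right Cc 0)) hCρ'0
              _ = max Cc 0 * Cρ' * ε ^ (-((N+Nc:ℕ):ℤ)) := by ring
      _ = (max C 0 + max Cc 0 * Cρ') * ε ^ (-((N+Nc:ℕ):ℤ)) := by ring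
  -- order-0 negligibility from the approximation argument
  have h0 := S5.stepA α u husm humod hhom0
  have hneg := S5.upgrade (fun ε x => u ε x - c ε * ((x ^ α : ℝ) : ℂ)) hwsm hwmod h0
  exact ⟨c, hcmod, hwsm, hneg⟩
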